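/- Let d, N ∈ ℕ with N ≥ 1, let p be a probability measure on ℝ^d, and define K : ℝ^d → ℝ by K(Δ) = ∫_{ℝ^d} cos(α · Δ) dp(α). For α_1, …, α_N ∈ ℝ^d and u ∈ ℝ^d define φ_N(u) = (1/√N) · ( cos(α_1 · u), …, cos(α_N · u), sin(α_1 · u), …, sin(α_N · u) ) ∈ ℝ^{2N}. Then for every fixed u, v ∈ ℝ^d and every ε > 0, the probability with respect to p^{⊗N} of the event { (α_1, …, α_N) : | ⟨φ_N(u), φ_N(v)⟩ − K(u − v) | ≥ ε } is at most 2 exp( − N ε² / 2 ). -/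

import Mathlib

open scoped BigOperators RealInnerProductSpace
open MeasureTheory

/-- Positivity of `cosh t + m * sinh t` for `|m| ≤ 1`. -/
lemma rffAux_g_pos {m : ℝ} (hm : |m| ≤ 1) (t : ℝ) : 0 < Real.cosh t + m * Real.sinh t := by
  have h1 : Real.cosh t + Real.sinh t = Real.exp t := Real.cosh_add_sinh t
  have h2 : Real.cosh t - Real.sinh t = Real.exp (-t) := Real.cosh_sub_sinh t
  have h3 := Real.exp_pos t
  have h4 := Real.exp_pos (-t)
  have hm' := abs_le.mp hm
  rcases le_or_gt 0 (Real.sinh t) with hs | hs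
  · nlinarith
  · nlinarith

/-- Key inequality for Hoeffding's lemma. -/
lemma rffAux_key {m : ℝ} (hm : |m| ≤ 1) (t : ℝ) :
    Real.cosh t + m * Real.sinh t ≤ Real.exp (t ^ 2 / 2 + t * m) := by
  set g : ℝ → ℝ := fun t => Real.cosh t + m * Real.sinh t with hg
  have hgpos : ∀ t, 0 < g t := fun t => rffAux_g_pos hm t
  set φ : ℝ → ℝ := fun t => t + m - (Real.sinh t + m * Real.cosh t) / g t with hφ
  have hderivg : ∀ t, HasDerivAt g (Real.sinh t + m * Real.cosh t) t := fun t =>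
    (Real.hasDerivAt_cosh t).add ((Real.hasDerivAt_sinh t).const_mul m)
  have hderivg' : ∀ t, HasDerivAt (fun t => Real.sinh t + m * Real.cosh t)
      (g t) t := fun t => by
    have := (Real.hasDerivAt_sinh t).add ((Real.hasDerivAt_cosh t).const_mul m)
    exact this
  have hsq : ∀ t, (g t) ^ 2 - (Real.sinh t + m * Real.cosh t) ^ 2 = 1 - m ^ 2 := by
    intro t
    have := Real.cosh_sq_sub_sinh_sq t
    simp only [hg]
    nlinarith
  have hderivφ : ∀ t, HasDerivAt φ (1 - (1 - m ^ 2) / (g t) ^ 2) t := by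
    intro t
    have hdiv : HasDerivAt (fun t => (Real.sinh t + m * Real.cosh t) / g t)
        (((g t) * g t - (Real.sinh t + m * Real.cosh t) * (Real.sinh t + m * Real.cosh t)) / (g t) ^ 2) t :=
      (hderivg' t).div (hderivg t) (hgpos t).ne'
    have h2 : ((g t) * g t - (Real.sinh t + m * Real.cosh t) * (Real.sinh t + m * Real.cosh t)) / (g t) ^ 2
        = (1 - m ^ 2) / (g t) ^ 2 := by
      rw [← hsq t]; ring_nf
    rw [h2] at hdiv
    exact ((hasDerivAt_id t).add_const m).sub hdiv
  have hφmono : Monotone φ := by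
    apply monotone_of_deriv_nonneg
    · exact fun t => (hderivφ t).differentiableAt
    · intro t
      rw [(hderivφ t).deriv]
      have h1 : (1 - m ^ 2) ≤ (g t) ^ 2 := by
        have := hsq t; nlinarith [sq_nonneg (Real.sinh t + m * Real.cosh t)]
      have h2 : (1 - m ^ 2) / (g t) ^ 2 ≤ 1 :=
        (div_le_one (pow_pos (hgpos t) 2)).mpr h1
      linarith
  have hφ0 : φ 0 = 0 := by simp [hφ, hg]
  set F : ℝ → ℝ := fun t => t ^ 2 / 2 + t * m - Real.log (g t) with hF
  have hderivF : ∀ t, HasDerivAt F (φ t) t := by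
    intro t
    have h1 : HasDerivAt (fun t : ℝ => t ^ 2 / 2 + t * m) (t + m) t := by
      have := ((hasDerivAt_pow 2 t).div_const 2).add ((hasDerivAt_id t).mul_const m)
      exact this.congr_deriv (by norm_num)
    have h2 : HasDerivAt (fun t => Real.log (g t)) ((Real.sinh t + m * Real.cosh t) / g t) t :=
      (hderivg t).log (hgpos t).ne'
    exact h1.sub h2
  have hF0 : F 0 = 0 := by simp [hF, hg]
  have hFnonneg : ∀ t, 0 ≤ F t := by
    intro t
    have hdiffF : ∀ x, DifferentiableAt ℝ F x := fun x => (hderivF x).differentiableAt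
    rcases le_or_gt 0 t with ht | ht
    · have hmono : MonotoneOn F (Set.Ici 0) := by
        apply monotoneOn_of_deriv_nonneg (convex_Ici 0)
          ((Differentiable.continuous (fun x => hdiffF x)).continuousOn)
          (fun x _ => (hdiffF x).differentiableWithinAt)
        intro x hx
        rw [(hderivF x).deriv]
        have : (0:ℝ) ≤ x := le_of_lt (by simpa using hx)
        calc (0:ℝ) = φ 0 := hφ0.symm
          _ ≤ φ x := hφmono this
      have := hmono (Set.mem_Ici.mpr le_rfl) (Set.mem_Ici.mpr ht) ht
      simpa [hF0] using this
    · have hanti : AntitoneOn F (Set.Iic 0) := by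
        apply antitoneOn_of_deriv_nonpos (convex_Iic 0)
          ((Differentiable.continuous (fun x => hdiffF x)).continuousOn)
          (fun x _ => (hdiffF x).differentiableWithinAt)
        intro x hx
        rw [(hderivF x).deriv]
        have hx0 : x ≤ (0:ℝ) := le_of_lt (by simpa using hx)
        calc φ x ≤ φ 0 := hφmono hx0
          _ = 0 := hφ0
      have := hanti (Set.mem_Iic.mpr ht.le) (Set.mem_Iic.mpr le_rfl) ht.le
      simpa [hF0] using this
  have := hFnonneg t
  have hlog : Real.log (g t) ≤ t ^ 2 / 2 + t * m := by simpa [hF] using this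
  calc g t = Real.exp (Real.log (g t)) := (Real.exp_log (hgpos t)).symm
    _ ≤ Real.exp (t ^ 2 / 2 + t * m) := Real.exp_le_exp.mpr hlog

/-- Convexity bound `exp (t*z) ≤ cosh t + z * sinh t` for `z ∈ [-1,1]`. -/
lemma rffAux_exp_le {z : ℝ} (hz : |z| ≤ 1) (t : ℝ) :
    Real.exp (t * z) ≤ Real.cosh t + z * Real.sinh t := by
  have hz' := abs_le.mp hz
  have h := convexOn_exp.2 (Set.mem_univ (-t)) (Set.mem_univ t)
    (show (0:ℝ) ≤ (1 - z) / 2 by linarith) (show (0:ℝ) ≤ (1 + z) / 2 by linarith)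
    (show (1 - z) / 2 + (1 + z) / 2 = 1 by ring)
  have h1 : ((1 - z) / 2) • (-t) + ((1 + z) / 2) • t = t * z := by
    rw [smul_eq_mul, smul_eq_mul]; ring
  rw [h1] at h
  calc Real.exp (t * z) ≤ ((1 - z) / 2) • Real.exp (-t) + ((1 + z) / 2) • Real.exp t := h
    _ = Real.cosh t + z * Real.sinh t := by
        simp only [smul_eq_mul, Real.cosh_eq, Real.sinh_eq]; ring

/-- Hoeffding's lemma for a `[-1,1]`-valued variable: the centered mgf is at most `exp (t²/2)`. -/
lemma rffAux_mgf_le {E : Type*} [MeasurableSpace E] (ν : Measure E) [IsProbabilityMeasure ν]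
    {Z : E → ℝ} (hZm : Measurable Z) (hZ : ∀ a, |Z a| ≤ 1) (t : ℝ) :
    ∫ a, Real.exp (t * (Z a - ∫ a, Z a ∂ν)) ∂ν ≤ Real.exp (t ^ 2 / 2) := by
  set m := ∫ a, Z a ∂ν with hm
  have hZint : Integrable Z ν := by
    refine (integrable_const (1:ℝ)).mono' hZm.aestronglyMeasurable ?_
    exact Filter.Eventually.of_forall fun a => by simpa using hZ a
  have hmabs : |m| ≤ 1 := by
    have := norm_integral_le_of_norm_le_const (C := 1)
      (Filter.Eventually.of_forall fun a : E => by simpa using hZ a) (μ := ν) (f := Z)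
    simpa [hm] using this
  have hptwise : ∀ a, Real.exp (t * Z a) ≤ Real.cosh t + Z a * Real.sinh t :=
    fun a => rffAux_exp_le (hZ a) t
  have hintexp : Integrable (fun a => Real.exp (t * Z a)) ν := by
    refine (integrable_const (Real.exp |t|)).mono'
      ((hZm.const_mul t).exp).aestronglyMeasurable ?_
    refine Filter.Eventually.of_forall fun a => ?_
    rw [Real.norm_eq_abs, Real.abs_exp]
    apply Real.exp_le_exp.mpr
    calc t * Z a ≤ |t * Z a| := le_abs_self _
      _ = |t| * |Z a| := abs_mul _ _
      _ ≤ |t| * 1 := by gcongr; exact hZ a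
      _ = |t| := mul_one _
  have hint2 : Integrable (fun a => Real.cosh t + Z a * Real.sinh t) ν :=
    (integrable_const _).add (hZint.mul_const _)
  have h1 : ∫ a, Real.exp (t * Z a) ∂ν ≤ Real.cosh t + m * Real.sinh t := by
    calc ∫ a, Real.exp (t * Z a) ∂ν ≤ ∫ a, (Real.cosh t + Z a * Real.sinh t) ∂ν :=
          integral_mono hintexp hint2 hptwise
      _ = Real.cosh t + m * Real.sinh t := by
          rw [integral_add (integrable_const _) (hZint.mul_const _), integral_const,
            integral_mul_const]
          simp [hm]
  have hrw : ∀ a, Real.exp (t * (Z a - m)) = Real.exp (t * Z a) * Real.exp (-(t * m)) := by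
    intro a; rw [← Real.exp_add]; ring_nf
  calc ∫ a, Real.exp (t * (Z a - m)) ∂ν
      = (∫ a, Real.exp (t * Z a) ∂ν) * Real.exp (-(t * m)) := by
        simp_rw [hrw]; exact integral_mul_const _ _
    _ ≤ (Real.cosh t + m * Real.sinh t) * Real.exp (-(t * m)) :=
        mul_le_mul_of_nonneg_right h1 (Real.exp_pos _).le
    _ ≤ Real.exp (t ^ 2 / 2 + t * m) * Real.exp (-(t * m)) :=
        mul_le_mul_of_nonneg_right (rffAux_key hmabs t) (Real.exp_pos _).le
    _ = Real.exp (t ^ 2 / 2) := by rw [← Real.exp_add]; ring_nf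

/-- The random Fourier feature map `φ_N(u) = (1/√N)(cos(α₁·u),…,cos(α_N·u),sin(α₁·u),…,sin(α_N·u))`
viewed as a vector of `ℝ^{2N}` (indexed by `Fin N ⊕ Fin N`). -/
noncomputable def rff {d N : ℕ} (α : Fin N → EuclideanSpace ℝ (Fin d))
    (u : EuclideanSpace ℝ (Fin d)) : EuclideanSpace ℝ (Fin N ⊕ Fin N) :=
  (WithLp.equiv 2 (Fin N ⊕ Fin N → ℝ)).symm
    (Sum.elim (fun k => (1 / Real.sqrt N) * Real.cos ⟪α k, u⟫)
      (fun k => (1 / Real.sqrt N) * Real.sin ⟪α k, u⟫))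

lemma rff_inner {d N : ℕ} (α : Fin N → EuclideanSpace ℝ (Fin d))
    (u v : EuclideanSpace ℝ (Fin d)) :
    ⟪rff α u, rff α v⟫ = (1 / (N:ℝ)) * ∑ k : Fin N, Real.cos ⟪α k, u - v⟫ := by
  rcases Nat.eq_zero_or_pos N with hN | hN
  · subst hN; simp [PiLp.inner_apply]
  have hNpos : (0:ℝ) < N := by positivity
  have hsq : (1 / Real.sqrt N) * (1 / Real.sqrt N) = 1 / (N:ℝ) := by
    rw [div_mul_div_comm, one_mul, Real.mul_self_sqrt (Nat.cast_nonneg N)]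
  simp only [rff, PiLp.inner_apply, RCLike.inner_apply, conj_trivial,
    WithLp.equiv_symm_apply, PiLp.toLp_apply, Fintype.sum_sum_type, Sum.elim_inl, Sum.elim_inr]
  rw [← Finset.sum_add_distrib, Finset.mul_sum]
  refine Finset.sum_congr rfl fun k _ => ?_
  have h1 : ∑ x : Fin d, (u - v) x * α k x =
      (∑ x : Fin d, u x * α k x) - ∑ x : Fin d, v x * α k x := by
    rw [← Finset.sum_sub_distrib]
    refine Finset.sum_congr rfl fun x _ => ?_
    have : (u - v) x = u x - v x := rfl
    rw [this]; ring
  rw [h1, Real.cos_sub]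
  set A := ∑ x : Fin d, u x * α k x
  set B := ∑ x : Fin d, v x * α k x
  linear_combination (Real.cos A * Real.cos B + Real.sin A * Real.sin B) * hsq

theorem rff_hoeffding_concentration
    (d N : ℕ) (hN : 1 ≤ N)
    (p : Measure (EuclideanSpace ℝ (Fin d))) [IsProbabilityMeasure p]
    (K : EuclideanSpace ℝ (Fin d) → ℝ)
    (hK : ∀ Δ, K Δ = ∫ α, Real.cos ⟪α, Δ⟫ ∂p)
    (u v : EuclideanSpace ℝ (Fin d)) (ε : ℝ) (hε : 0 < ε) :
    (Measure.pi fun _ : Fin N => p)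
        {α : Fin N → EuclideanSpace ℝ (Fin d) | ε ≤ |⟪rff α u, rff α v⟫ - K (u - v)|} ≤
      ENNReal.ofReal (2 * Real.exp (-(N : ℝ) * ε ^ 2 / 2)) := by
  classical
  set μ : Measure (Fin N → EuclideanSpace ℝ (Fin d)) := Measure.pi fun _ : Fin N => p with hμ
  have hNpos : (0:ℝ) < N := by exact_mod_cast hN
  set Z : EuclideanSpace ℝ (Fin d) → ℝ := fun a => Real.cos ⟪a, u - v⟫ with hZ
  have hZm : Measurable Z :=
    (Real.continuous_cos.comp (continuous_id.inner continuous_const)).measurable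
  have hZ1 : ∀ a, |Z a| ≤ 1 := fun a => Real.abs_cos_le_one _
  set K0 : ℝ := K (u - v) with hK0def
  have hK0 : K0 = ∫ a, Z a ∂p := by rw [hK0def]; exact hK (u - v)
  have hK0abs : |K0| ≤ 1 := by
    rw [hK0]
    have := norm_integral_le_of_norm_le_const (C := 1)
      (Filter.Eventually.of_forall fun a : EuclideanSpace ℝ (Fin d) => by simpa using hZ1 a) (μ := p) (f := Z)
    simpa using this
  set T : (Fin N → EuclideanSpace ℝ (Fin d)) → ℝ := fun α => ∑ i : Fin N, (Z (α i) - K0) with hT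
  have hTm : Measurable T := by
    apply Finset.measurable_sum
    exact fun i _ => (hZm.comp (measurable_pi_apply i)).sub measurable_const
  -- rewrite the event
  have hval : ∀ α : Fin N → EuclideanSpace ℝ (Fin d), ⟪rff α u, rff α v⟫ - K (u - v) = T α / N := by
    intro α
    have hTα : T α = (∑ k : Fin N, Z (α k)) - N * K0 := by
      show ∑ i : Fin N, (Z (α i) - K0) = _
      rw [Finset.sum_sub_distrib, Finset.sum_const, Finset.card_univ, Fintype.card_fin,
        nsmul_eq_mul]
    have hcos : ∑ k : Fin N, Real.cos ⟪α k, u - v⟫ = ∑ k : Fin N, Z (α k) := rfl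
    rw [rff_inner, hcos, ← hK0def, hTα]
    field_simp
  have hset : {α : Fin N → EuclideanSpace ℝ (Fin d) | ε ≤ |⟪rff α u, rff α v⟫ - K (u - v)|}
      = {α : Fin N → EuclideanSpace ℝ (Fin d) | (N:ℝ) * ε ≤ T α} ∪ {α : Fin N → EuclideanSpace ℝ (Fin d) | T α ≤ -((N:ℝ) * ε)} := by
    ext α
    simp only [Set.mem_setOf_eq, Set.mem_union, hval α]
    rw [abs_div, abs_of_pos hNpos, le_div_iff₀ hNpos, mul_comm ε (N:ℝ), le_abs]
    constructor
    · rintro (h | h)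
      · exact Or.inl h
      · exact Or.inr (by linarith)
    · rintro (h | h)
      · exact Or.inl h
      · exact Or.inr (by linarith)
  -- mgf bound
  letI : MeasureSpace (EuclideanSpace ℝ (Fin d)) := ⟨p⟩
  haveI : IsProbabilityMeasure (volume : Measure (EuclideanSpace ℝ (Fin d))) := ‹IsProbabilityMeasure p›
  have hmgf : ∀ t : ℝ, ProbabilityTheory.mgf T μ t ≤ Real.exp ((N:ℝ) * (t ^ 2 / 2)) := by
    intro t
    have h1 : ∀ α : Fin N → EuclideanSpace ℝ (Fin d), Real.exp (t * T α)
        = ∏ i : Fin N, Real.exp (t * (Z (α i) - K0)) := by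
      intro α
      rw [hT, Finset.mul_sum, Real.exp_sum]
    have h2 : ProbabilityTheory.mgf T μ t
        = ∫ α : Fin N → EuclideanSpace ℝ (Fin d), ∏ i : Fin N, Real.exp (t * (Z (α i) - K0)) ∂μ := by
      unfold ProbabilityTheory.mgf
      exact integral_congr_ae (Filter.Eventually.of_forall fun α => h1 α)
    have h3 : ∫ α : Fin N → EuclideanSpace ℝ (Fin d), ∏ i : Fin N, Real.exp (t * (Z (α i) - K0)) ∂μ
        = (∫ a : EuclideanSpace ℝ (Fin d), Real.exp (t * (Z a - K0)) ∂p) ^ N := by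
      have := MeasureTheory.integral_fintype_prod_eq_pow (𝕜 := ℝ) (ι := Fin N)
        (fun a : EuclideanSpace ℝ (Fin d) => Real.exp (t * (Z a - K0))) (μ := p)
      simpa [Fintype.card_fin] using this
    have h4 : ∫ a : EuclideanSpace ℝ (Fin d), Real.exp (t * (Z a - K0)) ∂p ≤ Real.exp (t ^ 2 / 2) := by
      rw [hK0]
      exact rffAux_mgf_le p hZm hZ1 t
    have h5 : (0:ℝ) ≤ ∫ a : EuclideanSpace ℝ (Fin d), Real.exp (t * (Z a - K0)) ∂p :=
      integral_nonneg fun a => (Real.exp_pos _).le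
    calc ProbabilityTheory.mgf T μ t
        = (∫ a : EuclideanSpace ℝ (Fin d), Real.exp (t * (Z a - K0)) ∂p) ^ N := by rw [h2, h3]
      _ ≤ (Real.exp (t ^ 2 / 2)) ^ N := pow_le_pow_left₀ h5 h4 N
      _ = Real.exp ((N:ℝ) * (t ^ 2 / 2)) := by rw [← Real.exp_nat_mul]
  -- integrability of exp (t * T) w.r.t. μ
  have hint : ∀ t : ℝ, Integrable (fun α => Real.exp (t * T α)) μ := by
    intro t
    refine (integrable_const (Real.exp (|t| * (2 * N)))).mono'
      ((hTm.const_mul t).exp).aestronglyMeasurable ?_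
    refine Filter.Eventually.of_forall fun α => ?_
    rw [Real.norm_eq_abs, Real.abs_exp]
    apply Real.exp_le_exp.mpr
    have hTabs : |T α| ≤ 2 * N := by
      calc |T α| ≤ ∑ i : Fin N, |Z (α i) - K0| := Finset.abs_sum_le_sum_abs _ _
        _ ≤ ∑ _i : Fin N, (2:ℝ) := by
            refine Finset.sum_le_sum fun i _ => ?_
            calc |Z (α i) - K0| ≤ |Z (α i)| + |K0| := abs_sub _ _
              _ ≤ 1 + 1 := add_le_add (hZ1 _) hK0abs
              _ = 2 := by norm_num
        _ = 2 * N := by simp [Finset.card_univ, mul_comm]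
    calc t * T α ≤ |t * T α| := le_abs_self _
      _ = |t| * |T α| := abs_mul _ _
      _ ≤ |t| * (2 * N) := by gcongr
  -- Chernoff bounds
  haveI : IsProbabilityMeasure μ := by
    rw [hμ]; infer_instance
  have hA : (μ {α : Fin N → EuclideanSpace ℝ (Fin d) | (N:ℝ) * ε ≤ T α}).toReal
      ≤ Real.exp (-(N:ℝ) * ε ^ 2 / 2) := by
    calc (μ {α : Fin N → EuclideanSpace ℝ (Fin d) | (N:ℝ) * ε ≤ T α}).toReal
        ≤ Real.exp (-ε * ((N:ℝ) * ε)) * ProbabilityTheory.mgf T μ ε :=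
          ProbabilityTheory.measure_ge_le_exp_mul_mgf ((N:ℝ) * ε) hε.le (hint ε)
      _ ≤ Real.exp (-ε * ((N:ℝ) * ε)) * Real.exp ((N:ℝ) * (ε ^ 2 / 2)) :=
          mul_le_mul_of_nonneg_left (hmgf ε) (Real.exp_pos _).le
      _ = Real.exp (-(N:ℝ) * ε ^ 2 / 2) := by
          rw [← Real.exp_add]; congr 1; ring
  have hB : (μ {α : Fin N → EuclideanSpace ℝ (Fin d) | T α ≤ -((N:ℝ) * ε)}).toReal
      ≤ Real.exp (-(N:ℝ) * ε ^ 2 / 2) := by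
    calc (μ {α : Fin N → EuclideanSpace ℝ (Fin d) | T α ≤ -((N:ℝ) * ε)}).toReal
        ≤ Real.exp (-(-ε) * (-((N:ℝ) * ε))) * ProbabilityTheory.mgf T μ (-ε) :=
          ProbabilityTheory.measure_le_le_exp_mul_mgf (-((N:ℝ) * ε)) (by linarith) (hint (-ε))
      _ ≤ Real.exp (-(-ε) * (-((N:ℝ) * ε))) * Real.exp ((N:ℝ) * ((-ε) ^ 2 / 2)) :=
          mul_le_mul_of_nonneg_left (hmgf (-ε)) (Real.exp_pos _).le
      _ = Real.exp (-(N:ℝ) * ε ^ 2 / 2) := by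
          rw [← Real.exp_add]; congr 1; ring
  -- assemble
  rw [hset]
  calc μ ({α : Fin N → EuclideanSpace ℝ (Fin d) | (N:ℝ) * ε ≤ T α} ∪ {α : Fin N → EuclideanSpace ℝ (Fin d) | T α ≤ -((N:ℝ) * ε)})
      ≤ μ {α : Fin N → EuclideanSpace ℝ (Fin d) | (N:ℝ) * ε ≤ T α} + μ {α : Fin N → EuclideanSpace ℝ (Fin d) | T α ≤ -((N:ℝ) * ε)} :=
        measure_union_le _ _
    _ ≤ ENNReal.ofReal (Real.exp (-(N:ℝ) * ε ^ 2 / 2))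
        + ENNReal.ofReal (Real.exp (-(N:ℝ) * ε ^ 2 / 2)) := by
        gcongr
        · rw [← ENNReal.ofReal_toReal (measure_ne_top μ _)]
          exact ENNReal.ofReal_le_ofReal hA
        · rw [← ENNReal.ofReal_toReal (measure_ne_top μ _)]
          exact ENNReal.ofReal_le_ofReal hB
    _ = ENNReal.ofReal (2 * Real.exp (-(N : ℝ) * ε ^ 2 / 2)) := by
        rw [← ENNReal.ofReal_add (Real.exp_pos _).le (Real.exp_pos _).le]
        congr 1; ring
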